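/- Within a visible tree, the initial move determined by the local backward induction strategy is weakly preferred (with respect to the subjective preference) to any other first move: let (T,s) be a preference–sight tree, h a history, z* a ⪰-maximal element of Z_h, and a an action with h·a ⊴ z*. Then for every action a' with h·a' ∈ s(h), we have h·a ⪰_h h·a'. -/

import Mathlib

/-- A preference tree: a nonempty finite, prefix-closed set `H` of histories
(finite sequences of actions) containing the empty sequence, together with a
total preorder `pref` (the preference `⪰`) on `H`. -/
structure PrefTree (A : Type) where
  H : Set (List A)
  pref : List A → List A → Prop
  H_finite : H.Finite
  nil_mem : ([] : List A) ∈ H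
  prefix_closed : ∀ ⦃h h' : List A⦄, h <+: h' → h' ∈ H → h ∈ H
  pref_refl : ∀ h ∈ H, pref h h
  pref_trans : ∀ h₁ ∈ H, ∀ h₂ ∈ H, ∀ h₃ ∈ H, pref h₁ h₂ → pref h₂ h₃ → pref h₁ h₃
  pref_total : ∀ h₁ ∈ H, ∀ h₂ ∈ H, pref h₁ h₂ ∨ pref h₂ h₁

/-- A history is terminal if no one-step extension of it lies in `H`. -/
def PrefTree.Terminal {A : Type} (T : PrefTree A) (z : List A) : Prop :=
  z ∈ T.H ∧ ∀ a : A, z ++ [a] ∉ T.H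

/-- A sight function for a preference tree `T`: assigns to each history `h ∈ H` a
finite nonempty subset of `H` of histories extending `h`, containing `h`, and downward closed (DC). -/
structure SightFun (A : Type) (T : PrefTree A) where
  s : List A → Set (List A)
  subset_H : ∀ h ∈ T.H, s h ⊆ T.H
  mem_extends : ∀ h ∈ T.H, ∀ h' ∈ s h, h <+: h'
  s_nonempty : ∀ h ∈ T.H, (s h).Nonempty
  s_finite : ∀ h ∈ T.H, (s h).Finite
  mem_self : ∀ h ∈ T.H, h ∈ s h
  dc : ∀ h ∈ T.H, ∀ h' h'' : List A, h <+: h' → h' <+: h'' → h'' ∈ s h → h' ∈ s h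

/-- `Z_h`: the set of histories in `s h` having no proper extension in `s h`. -/
def SightFun.Zs {A : Type} {T : PrefTree A} (s : SightFun A T) (h : List A) : Set (List A) :=
  {z | z ∈ s.s h ∧ ∀ z' ∈ s.s h, z <+: z' → z' = z}

/-- The subjective preference `h1 ⪰_h h2` at `h`: `z1 ⪰ z2`, where `z1` is a
`⪰`-maximal element of `{z ∈ Z_h : h1 ⊴ z}` and `z2` is a `⪰`-maximal element of
`{z ∈ Z_h : h2 ⊴ z}`. -/
def SubjPref {A : Type} (T : PrefTree A) (s : SightFun A T) (h h₁ h₂ : List A) : Prop :=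
  ∃ z₁ z₂ : List A,
    z₁ ∈ s.Zs h ∧ h₁ <+: z₁ ∧ (∀ w ∈ s.Zs h, h₁ <+: w → T.pref z₁ w) ∧
    z₂ ∈ s.Zs h ∧ h₂ <+: z₂ ∧ (∀ w ∈ s.Zs h, h₂ <+: w → T.pref z₂ w) ∧
    T.pref z₁ z₂


lemma exists_pref_max_fin {A : Type} (T : PrefTree A) (F : Finset (List A))
    (hne : F.Nonempty) : (↑F : Set (List A)) ⊆ T.H → ∃ z ∈ F, ∀ w ∈ F, T.pref z w := by
  classical
  induction hne using Finset.Nonempty.cons_induction with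
  | singleton x =>
    intro hSH
    exact ⟨x, by simp, fun w hw => by
      simp only [Finset.mem_singleton] at hw; subst hw
      exact T.pref_refl w (hSH (by simp))⟩
  | cons x F hx hFne ih =>
    intro hSH
    have hSH' : (↑F : Set (List A)) ⊆ T.H := fun y hy => hSH (by simp [hy])
    obtain ⟨z, hz, hzmax⟩ := ih hSH'
    have hxH : x ∈ T.H := hSH (by simp)
    have hzH : z ∈ T.H := hSH' hz
    rcases T.pref_total x hxH z hzH with hxz | hzx
    · refine ⟨x, by simp, fun w hw => ?_⟩
      rcases Finset.mem_cons.mp hw with hwx | hw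
      · rw [hwx]; exact T.pref_refl x hxH
      · exact T.pref_trans x hxH z hzH w (hSH' hw) hxz (hzmax w hw)
    · refine ⟨z, by simp [hz], fun w hw => ?_⟩
      rcases Finset.mem_cons.mp hw with hwx | hw
      · rw [hwx]; exact hzx
      · exact hzmax w hw

lemma exists_pref_max {A : Type} (T : PrefTree A) (S : Set (List A))
    (hfin : S.Finite) (hSH : S ⊆ T.H) (hne : S.Nonempty) :
    ∃ z ∈ S, ∀ w ∈ S, T.pref z w := by
  classical
  obtain ⟨F, hF⟩ := hfin.exists_finset_coe
  subst hF
  obtain ⟨z, hz, hzmax⟩ := exists_pref_max_fin T F (by simpa using hne) hSH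
  exact ⟨z, hz, fun w hw => hzmax w hw⟩

lemma exists_Zs_ext {A : Type} {T : PrefTree A} (s : SightFun A T)
    (h h' : List A) (hh : h ∈ T.H) (hh' : h' ∈ s.s h) :
    ∃ z ∈ s.Zs h, h' <+: z := by
  classical
  set E : Set (List A) := {w ∈ s.s h | h' <+: w} with hE
  have hEfin : E.Finite := (s.s_finite h hh).subset (fun w hw => hw.1)
  have hEne : E.Nonempty := ⟨h', hh', List.prefix_refl _⟩
  obtain ⟨z, hzE, hzmax⟩ : ∃ z ∈ E, ∀ z' ∈ E, z.length ≤ z'.length → z.length = z'.length := by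
    obtain ⟨z, hzE, hzm⟩ := hEfin.exists_maximalFor List.length E hEne
    exact ⟨z, hzE, fun z' hz' hle => le_antisymm hle (hzm hz' hle)⟩
  refine ⟨z, ⟨hzE.1, ?_⟩, hzE.2⟩
  intro z' hz' hpre
  have hz'E : z' ∈ E := ⟨hz', hzE.2.trans hpre⟩
  have hlen := hzmax z' hz'E hpre.length_le
  exact (List.IsPrefix.eq_of_length hpre hlen).symm

/-- Within a visible tree, the initial move determined by the local backward
induction strategy is weakly preferred, w.r.t. the subjective preference, to
any other first move: if `z*` is a `⪰`-maximal element of `Z_h` and `h·a ⊴ z*`,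
then for every action `a'` with `h·a' ∈ s(h)` we have `h·a ⪰_h h·a'`. -/
theorem stmt12 {A : Type} (T : PrefTree A) (s : SightFun A T)
    (h zstar : List A) (a : A)
    (hh : h ∈ T.H) (hz : zstar ∈ s.Zs h) (hmax : ∀ w ∈ s.Zs h, T.pref zstar w)
    (ha : (h ++ [a]) <+: zstar) :
    ∀ a' : A, (h ++ [a']) ∈ s.s h → SubjPref T s h (h ++ [a]) (h ++ [a']) := by
  intro a' hmem
  obtain ⟨z0, hz0, hpre0⟩ := exists_Zs_ext s h (h ++ [a']) hh hmem
  classical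
  set E : Set (List A) := {w ∈ s.Zs h | (h ++ [a']) <+: w} with hE
  have hZsub : s.Zs h ⊆ s.s h := fun w hw => hw.1
  have hEfin : E.Finite := ((s.s_finite h hh).subset hZsub).subset (fun w hw => hw.1)
  have hEH : E ⊆ T.H := fun w hw => s.subset_H h hh (hZsub hw.1)
  obtain ⟨z₂, hz₂E, hz₂max⟩ := exists_pref_max T E hEfin hEH ⟨z0, hz0, hpre0⟩
  refine ⟨zstar, z₂, hz, ha, fun w hw _ => hmax w hw, hz₂E.1, hz₂E.2,
    fun w hw hp => hz₂max w ⟨hw, hp⟩, hmax z₂ hz₂E.1⟩
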